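/- Let X be a real Banach space and ω : X × X → ℝ a continuous alternating bilinear form. Then the induced map L_ω : X → X*, L_ω(x)(y) = ω(x,y), is an isomorphism onto X* if and only if X is reflexive and L_ω is an isomorphism onto its image (i.e., bounded below). -/

import Mathlib

/-- For a continuous alternating bilinear form ω on a real Banach space X,
the induced map L_ω : X → X* is an isomorphism onto X* iff X is reflexive and L_ω is
an isomorphism onto its image (bounded below). -/
theorem stmt0 {X : Type*} [NormedAddCommGroup X] [NormedSpace ℝ X] [CompleteSpace X]
    (ω : X →L[ℝ] X →L[ℝ] ℝ) (halt : ∀ x y, ω x y = -ω y x) :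
    Function.Bijective ω ↔
      (Function.Surjective (NormedSpace.inclusionInDoubleDual ℝ X) ∧
        ∃ c > 0, ∀ x, c * ‖x‖ ≤ ‖ω x‖) := by
  constructor
  · intro hbij
    have hker : LinearMap.ker (ω : X →ₗ[ℝ] (X →L[ℝ] ℝ)) = ⊥ := LinearMap.ker_eq_bot.mpr hbij.1
    have hrange : LinearMap.range (ω : X →ₗ[ℝ] (X →L[ℝ] ℝ)) = ⊤ := LinearMap.range_eq_top.mpr hbij.2
    let e : X ≃L[ℝ] (X →L[ℝ] ℝ) := ContinuousLinearEquiv.ofBijective ω hker hrange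
    have he : ∀ x, e x = ω x := fun x => by
      rw [show ⇑e = ⇑ω from ContinuousLinearEquiv.coeFn_ofBijective ω hker hrange]
    constructor
    · intro F
      refine ⟨e.symm (-(F.comp ω)), ?_⟩
      ext f
      obtain ⟨y, rfl⟩ := hbij.2 f
      have hx : ω (e.symm (-(F.comp ω))) = -(F.comp ω) := by
        rw [← he]; exact e.apply_symm_apply _
      rw [NormedSpace.dual_def]
      calc (ω y) (e.symm (-(F.comp ω))) = -(ω (e.symm (-(F.comp ω))) y) := by rw [halt]
        _ = F (ω y) := by rw [hx]; simp
    · set M := ‖(e.symm : (X →L[ℝ] ℝ) →L[ℝ] X)‖ with hM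
      have hM0 : 0 ≤ M := norm_nonneg ((e.symm : (X →L[ℝ] ℝ) →L[ℝ] X))
      refine ⟨(M + 1)⁻¹, by positivity, fun x => ?_⟩
      have h1 : ‖x‖ ≤ M * ‖ω x‖ := by
        calc ‖x‖ = ‖e.symm (e x)‖ := by rw [e.symm_apply_apply]
          _ ≤ M * ‖e x‖ := (e.symm : (X →L[ℝ] ℝ) →L[ℝ] X).le_opNorm _
          _ = M * ‖ω x‖ := by rw [he]
      rw [inv_mul_le_iff₀ (by positivity)]
      nlinarith [norm_nonneg (ω x)]
  · rintro ⟨hrefl, c, hc, hb⟩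
    have hinj : Function.Injective ω := by
      intro x y hxy
      have h0 : ω (x - y) = 0 := by rw [map_sub, hxy, sub_self]
      have := hb (x - y)
      rw [h0, norm_zero] at this
      have : ‖x - y‖ ≤ 0 := by nlinarith [norm_nonneg (x - y)]
      rwa [← sub_eq_zero, ← norm_le_zero_iff]
    refine ⟨hinj, ?_⟩
    -- antilipschitz, closed range
    have hanti : AntilipschitzWith (⟨c, hc.le⟩ : NNReal)⁻¹ ω := by
      refine ω.antilipschitz_of_bound fun x => ?_
      show ‖x‖ ≤ c⁻¹ * ‖ω x‖
      rw [le_inv_mul_iff₀ hc]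
      exact hb x
    have hclosed : IsClosed (Set.range ω) := hanti.isClosed_range ω.uniformContinuous
    intro f
    by_contra hf
    have hfmem : f ∉ Set.range ω := fun ⟨x, hx⟩ => hf ⟨x, hx⟩
    have hconv : Convex ℝ (Set.range ω) := by
      have : (Set.range ω) = ((LinearMap.range (ω : X →ₗ[ℝ] (X →L[ℝ] ℝ)) : Submodule ℝ (X →L[ℝ] ℝ)) : Set (X →L[ℝ] ℝ)) := by
        ext g; simp [LinearMap.mem_range]
      rw [this]
      exact (LinearMap.range (ω : X →ₗ[ℝ] (X →L[ℝ] ℝ))).convex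
    obtain ⟨F, u, hFf, hFr⟩ := geometric_hahn_banach_point_closed hconv hclosed hfmem
    have hu0 : u < 0 := by
      have := hFr 0 ⟨0, by simp⟩
      simpa using this
    have hFzero : ∀ y, F (ω y) = 0 := by
      intro y
      by_contra hne
      have key : ∀ t : ℝ, u < t * F (ω y) := by
        intro t
        have := hFr (t • ω y) ⟨t • y, by rw [map_smul]⟩
        simpa using this
      rcases lt_or_gt_of_ne hne with h | h
      · have := key ((u - 1) / F (ω y))
        rw [div_mul_cancel₀ _ (ne_of_lt h)] at this; linarith
      · have := key ((u - 1) / F (ω y))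
        rw [div_mul_cancel₀ _ (ne_of_gt h)] at this; linarith
    obtain ⟨x, hx⟩ := hrefl F
    have hωx : ω x = 0 := by
      ext y
      have h2 := hFzero y
      have h1 : F (ω y) = (ω y) x := by rw [← hx]; rfl
      rw [h1, halt] at h2
      simpa [neg_eq_zero] using h2
    have hx0 : x = 0 := hinj (by rw [hωx, map_zero])
    rw [hx0, map_zero] at hx
    have := hFf
    rw [← hx] at this
    simp at this
    linarith [hu0]
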